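/- Let g ∈ ℝʳ, λ > 0, G ≥ 0, and x ∈ ℝʳ with an optimal subgradient g⋆ ∈ λ·∂‖·‖₁(x) satisfying ‖g⋆ - g‖₂ ≤ G. If for coordinate j it holds that |g_j| + G < λ, then x_j = 0. -/
import Mathlib

/-- Theorem 1(2) of the paper: if the optimal subgradient `g⋆ ∈ λ·∂‖·‖₁(x)` satisfies
`‖g⋆ - g‖₂ ≤ G` for an approximate dual `g`, and `|g_j| + G < λ`, then `x_j = 0`. -/
theorem safe_variable_screening
    {r : ℕ} (x gstar g : Fin r → ℝ) (lam G : ℝ) (hlam : 0 < lam) (hG : 0 ≤ G)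
    (hsub : ∀ j, (x j ≠ 0 → gstar j = lam * Real.sign (x j)) ∧
      (x j = 0 → |gstar j| ≤ lam))
    (hgap : Real.sqrt (∑ j, (gstar j - g j) ^ 2) ≤ G)
    (j : Fin r) (hj : |g j| + G < lam) :
    x j = 0 := by
  by_contra hx
  have hg : gstar j = lam * Real.sign (x j) := (hsub j).1 hx
  have hsign : |Real.sign (x j)| = 1 := by
    rcases lt_trichotomy (x j) 0 with h | h | h
    · simp [Real.sign_of_neg h]
    · exact absurd h hx
    · simp [Real.sign_of_pos h]
  have habs : |gstar j| = lam := by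
    rw [hg, abs_mul, hsign, abs_of_pos hlam, mul_one]
  have h1 : (gstar j - g j) ^ 2 ≤ ∑ i, (gstar i - g i) ^ 2 :=
    Finset.single_le_sum (f := fun i => (gstar i - g i) ^ 2) (fun i _ => sq_nonneg _) (Finset.mem_univ j)
  have h2 : |gstar j - g j| ≤ G := by
    have h3 := (Real.sqrt_le_sqrt h1).trans hgap
    rwa [Real.sqrt_sq_eq_abs] at h3
  have : |gstar j| ≤ |g j| + G := by
    calc |gstar j| ≤ |g j| + |gstar j - g j| := by
          have := abs_add_le (g j) (gstar j - g j); simpa using this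
      _ ≤ |g j| + G := by linarith
  linarith [habs ▸ this]
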